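/- Let a, b, c, d be positive real numbers and τ ≥ 0 a real number, and assume a·b < d·(c+d). Then every complex number λ satisfying (λ + d)·(λ + c + d − (a·b/d)·Complex.exp(−λ·τ)) = 0 has negative real part (λ.re < 0). -/

import Mathlib

theorem stmt_10 (a b c d τ : ℝ) (ha : 0 < a) (hb : 0 < b) (hc : 0 < c) (hd : 0 < d)
    (hτ : 0 ≤ τ) (hstab : a * b < d * (c + d)) :
    ∀ lam : ℂ,
      (lam + (d : ℂ)) * (lam + (c : ℂ) + (d : ℂ) -
        ((a * b / d : ℝ) : ℂ) * Complex.exp (-lam * (τ : ℂ))) = 0 →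
      lam.re < 0 := by
  intro lam h
  rcases mul_eq_zero.mp h with h1 | h2
  · have : lam = -(d : ℂ) := by linear_combination h1
    rw [this]
    simpa using hd
  · by_contra hre
    push_neg at hre
    have heq : lam + (c : ℂ) + (d : ℂ) = ((a * b / d : ℝ) : ℂ) * Complex.exp (-lam * (τ : ℂ)) := by
      linear_combination h2
    have habs : ‖(lam + (c : ℂ) + (d : ℂ))‖ =
        (a * b / d) * Real.exp (-lam.re * τ) := by
      rw [heq, norm_mul, Complex.norm_exp]
      have hre' : (-lam * (τ : ℂ)).re = -lam.re * τ := by simp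
      rw [hre', Complex.norm_real, Real.norm_eq_abs, abs_of_pos (by positivity)]
    have h1 : c + d ≤ ‖(lam + (c : ℂ) + (d : ℂ))‖ := by
      have := Complex.re_le_norm (lam + (c : ℂ) + (d : ℂ))
      simp only [Complex.add_re, Complex.ofReal_re] at this
      linarith
    have h2' : (a * b / d) * Real.exp (-lam.re * τ) ≤ a * b / d := by
      have : Real.exp (-lam.re * τ) ≤ 1 := by
        apply Real.exp_le_one_iff.mpr
        nlinarith
      nlinarith [div_pos (mul_pos ha hb) hd]
    have h3 : a * b / d < c + d := (div_lt_iff₀ hd).mpr (by nlinarith)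
    rw [habs] at h1
    linarith
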